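/- Let w be a finite binary word and α > 2 a real number. Then w is α-power-free if and only if μ(w) is α-power-free. -/

import Mathlib

/-- Thue–Morse morphism: 0 ↦ 01, 1 ↦ 10 (false = 0, true = 1). -/
def mu : List Bool → List Bool :=
  fun w => w.flatMap (fun b => if b then [true, false] else [false, true])

/-- `w` has period `p`: `w[i] = w[i+p]` whenever both defined. -/
def HasPeriod (w : List Bool) (p : ℕ) : Prop :=
  ∀ i, i + p < w.length → w[i]? = w[i + p]?

/-- `w` is α-power-free: no factor `u` has a period `p` with `|u|/p ≥ α`. -/
def PowerFree (α : ℝ) (w : List Bool) : Prop :=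
  ∀ u p, u <:+: w → 0 < p → HasPeriod u p → (u.length : ℝ) / p < α

/-- `𝓛`: factors of images of `mu`. -/
def InL (w : List Bool) : Prop := ∃ x, w <:+: mu x

lemma mu_length (w : List Bool) : (mu w).length = 2 * w.length := by
  induction w with
  | nil => rfl
  | cons b t ih => cases b <;> simp [mu, List.flatMap_cons] at * <;> omega

lemma mu_getD_even (w : List Bool) (i : ℕ) (h : i < w.length) :
    (mu w).getD (2*i) false = w.getD i false := by
  induction w generalizing i with
  | nil => simp at h
  | cons b t ih =>
    cases i with
    | zero => cases b <;> rfl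
    | succ n =>
      have e : 2 * (n+1) = 2*n + 1 + 1 := by ring
      have hn : n < t.length := by simp at h; omega
      cases b <;>
        simpa [mu, List.flatMap_cons, e, List.getD_cons_succ] using ih n hn

lemma mu_getD_odd (w : List Bool) (i : ℕ) (h : i < w.length) :
    (mu w).getD (2*i+1) false = !(w.getD i false) := by
  induction w generalizing i with
  | nil => simp at h
  | cons b t ih =>
    cases i with
    | zero => cases b <;> rfl
    | succ n =>
      have e : 2 * (n+1) + 1 = 2*n + 1 + 1 + 1 := by ring
      have hn : n < t.length := by simp at h; omega
      cases b <;>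
        simpa [mu, List.flatMap_cons, e, List.getD_cons_succ] using ih n hn

lemma hasPeriod_getD {u : List Bool} {p : ℕ} (h : HasPeriod u p) :
    ∀ i, i + p < u.length → u.getD i false = u.getD (i+p) false := by
  intro i hi
  have := h i hi
  simp [List.getD_eq_getElem?_getD, this]

lemma getD_hasPeriod {u : List Bool} {p : ℕ}
    (h : ∀ i, i + p < u.length → u.getD i false = u.getD (i+p) false) :
    HasPeriod u p := by
  intro i hi
  have h2 := h i hi
  have h3 : i < u.length := by omega
  rw [List.getElem?_eq_getElem h3, List.getElem?_eq_getElem hi]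
  rw [List.getD_eq_getElem _ _ h3, List.getD_eq_getElem _ _ hi] at h2
  simp [h2]

lemma infix_index {u v : List Bool} (h : u <:+: v) :
    ∃ s, s + u.length ≤ v.length ∧
      ∀ j, j < u.length → u.getD j false = v.getD (s+j) false := by
  obtain ⟨l1, l2, rfl⟩ := h
  refine ⟨l1.length, by simp, ?_⟩
  intro j hj
  rw [List.append_assoc]
  rw [List.getD_append_right _ _ _ _ (by omega : l1.length ≤ l1.length + j)]
  simp only [Nat.add_sub_cancel_left]
  rw [List.getD_append _ _ _ _ hj]

lemma take_drop_infix (w : List Bool) (s n : ℕ) :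
    ((w.drop s).take n) <:+: w :=
  ((w.drop s).take_prefix n).isInfix.trans (w.drop_suffix s).isInfix

lemma take_drop_length {w : List Bool} {s n : ℕ} (h : s + n ≤ w.length) :
    ((w.drop s).take n).length = n := by simp; omega

lemma take_drop_getD {w : List Bool} {s n : ℕ} (h : s + n ≤ w.length) (j : ℕ) (hj : j < n) :
    ((w.drop s).take n).getD j false = w.getD (s+j) false := by
  have h1 : j < ((w.drop s).take n).length := by rw [take_drop_length h]; exact hj
  rw [List.getD_eq_getElem _ _ h1, List.getD_eq_getElem _ _ (by omega)]
  simp [List.getElem_take, List.getElem_drop]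

section Main

variable {w u : List Bool} {s p : ℕ}

lemma odd_period_impossible (w u : List Bool) (s p : ℕ)
    (hp : p % 2 = 1) (hlu : 2*p < u.length)
    (hlen : s + u.length ≤ (mu w).length)
    (hidx : ∀ j, j < u.length → u.getD j false = (mu w).getD (s+j) false)
    (hper : ∀ i, i + p < u.length → u.getD i false = u.getD (i+p) false) :
    False := by
  set M : ℕ → Bool := fun k => (mu w).getD k false with hM
  have hmw : (mu w).length = 2 * w.length := mu_length w
  have P : ∀ k, s ≤ k → k + p < s + u.length → M k = M (k+p) := by
    intro k hk1 hk2
    have h1 := hidx (k-s) (by omega)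
    have h2 := hidx (k-s+p) (by omega)
    have h3 := hper (k-s) (by omega)
    have e1 : s + (k-s) = k := by omega
    have e2 : s + (k-s+p) = k+p := by omega
    rw [e1] at h1; rw [e2] at h2
    simp only [hM]
    rw [← h1, ← h2]; exact h3
  have pair : ∀ i, i < w.length → M (2*i) ≠ M (2*i+1) := by
    intro i hi
    simp only [hM, mu_getD_even w i hi, mu_getD_odd w i hi]
    cases w.getD i false <;> simp
  have claimA : ∀ j, s ≤ 2*j+1 → 2*j+2 < s + u.length → M (2*j+1) ≠ M (2*j+2) := by
    intro j h1 h2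
    by_cases hc : 2*j+2+p < s + u.length
    · obtain ⟨r, hr⟩ : ∃ r, 2*j+1+p = 2*r := ⟨(2*j+1+p)/2, by omega⟩
      have e1 := P (2*j+1) (by omega) (by omega)
      have e2 := P (2*j+2) (by omega) (by omega)
      have hrw : r + 1 ≤ w.length := by omega
      have hne := pair r (by omega)
      rw [hr] at e1
      have e2' : M (2*j+2) = M (2*r+1) := by rw [e2]; congr 1; omega
      intro hEq; exact hne (by rw [← e1, ← e2', hEq])
    · have hk : s ≤ 2*j+1-p := by omega
      obtain ⟨r, hr⟩ : ∃ r, 2*j+1-p = 2*r := ⟨(2*j+1-p)/2, by omega⟩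
      have e1 := P (2*j+1-p) hk (by omega)
      have e2 := P (2*j+2-p) (by omega) (by omega)
      have hne := pair r (by omega)
      have e1' : M (2*r) = M (2*j+1) := by rw [← hr, e1]; congr 1; omega
      have e2' : M (2*r+1) = M (2*j+2) := by
        rw [show 2*r+1 = 2*j+2-p by omega, e2]; congr 1; omega
      intro hEq; exact hne (by rw [e1', e2', hEq])
  have altstep : ∀ m, s ≤ m → m+1 < s + u.length → M m ≠ M (m+1) := by
    intro m hm1 hm2
    rcases Nat.even_or_odd m with ⟨i, hi⟩ | ⟨i, hi⟩
    · have : m = 2*i := by omega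
      subst this
      exact pair i (by omega)
    · have : m = 2*i+1 := by omega
      subst this
      exact claimA i (by omega) (by omega)
  have chain : ∀ t, t ≤ p → M (s+t) = if t % 2 = 0 then M s else !(M s) := by
    intro t
    induction t with
    | zero => intro _; simp
    | succ n ih =>
      intro h
      have hn := ih (by omega)
      have hne := altstep (s+n) (by omega) (by omega)
      have hstep : M (s+n+1) = !(M (s+n)) := by
        cases h1 : M (s+n) <;> cases h2 : M (s+n+1) <;> simp_all
      have e : s + (n+1) = s+n+1 := by omega
      rw [e, hstep, hn]
      by_cases hpar : n % 2 = 0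
      · have h2 : ¬ ((n+1) % 2 = 0) := by omega
        simp [hpar, h2]
      · have h2 : (n+1) % 2 = 0 := by omega
        simp [hpar, h2]
  have hps := chain p le_rfl
  rw [if_neg (by omega)] at hps
  have hP := P s le_rfl (by omega)
  rw [hps] at hP
  cases h : M s <;> rw [h] at hP <;> simp at hP

lemma even_period (w u : List Bool) (s q : ℕ)
    (hlu : 2*(2*q) < u.length)
    (hlen : s + u.length ≤ (mu w).length)
    (hidx : ∀ j, j < u.length → u.getD j false = (mu w).getD (s+j) false)
    (hper : ∀ i, i + 2*q < u.length → u.getD i false = u.getD (i+2*q) false) :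
    ∃ v, v <:+: w ∧ HasPeriod v q ∧ u.length ≤ 2 * v.length := by
  set M : ℕ → Bool := fun k => (mu w).getD k false with hM
  have hmw : (mu w).length = 2 * w.length := mu_length w
  have P : ∀ k, s ≤ k → k + 2*q < s + u.length → M k = M (k+2*q) := by
    intro k hk1 hk2
    have h1 := hidx (k-s) (by omega)
    have h2 := hidx (k-s+2*q) (by omega)
    have h3 := hper (k-s) (by omega)
    have e1 : s + (k-s) = k := by omega
    have e2 : s + (k-s+2*q) = k+2*q := by omega
    rw [e1] at h1; rw [e2] at h2
    simp only [hM]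
    rw [← h1, ← h2]; exact h3
  set i0 : ℕ := s/2 with hi0
  set i1 : ℕ := (s + u.length - 1)/2 with hi1
  set n : ℕ := i1 - i0 + 1 with hn
  have hvlen : i0 + n ≤ w.length := by omega
  refine ⟨(w.drop i0).take n, take_drop_infix w i0 n, ?_, by rw [take_drop_length hvlen]; omega⟩
  apply getD_hasPeriod
  intro i hi
  rw [take_drop_length hvlen] at hi
  rw [take_drop_getD hvlen i (by omega), take_drop_getD hvlen (i+q) hi]
  set a : ℕ := i0 + i with ha
  have haq : a + q ≤ i1 := by omega
  have hawq : a + q < w.length := by omega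
  have haw : a < w.length := by omega
  rw [show i0 + (i+q) = a + q by omega]
  by_cases hs : s ≤ 2*a
  · have e := P (2*a) hs (by omega)
    rw [show 2*a+2*q = 2*(a+q) by ring] at e
    rw [hM] at e
    simp only [mu_getD_even w a haw, mu_getD_even w (a+q) hawq] at e
    exact e
  · have hsa : 2*a + 1 = s := by omega
    have e := P (2*a+1) (by omega) (by omega)
    rw [show 2*a+1+2*q = 2*(a+q)+1 by ring] at e
    rw [hM] at e
    simp only [mu_getD_odd w a haw, mu_getD_odd w (a+q) hawq] at e
    simpa using e

end Main

theorem powerFree_iff_mu (w : List Bool) (α : ℝ) (hα : 2 < α) :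
    PowerFree α w ↔ PowerFree α (mu w) := by
  constructor
  · intro hw u p hinf hp hper
    by_contra hlt
    push_neg at hlt
    have hp' : (0:ℝ) < p := by exact_mod_cast hp
    have hαp : α * p ≤ (u.length : ℝ) := (le_div_iff₀ hp').mp hlt
    have hul : 2 * p < u.length := by
      have h2 : (2:ℝ) * p < (u.length : ℝ) := by nlinarith
      exact_mod_cast h2
    obtain ⟨s, hlen, hidx⟩ := infix_index hinf
    have hperD := hasPeriod_getD hper
    rcases Nat.even_or_odd p with ⟨q, hq⟩ | ⟨q, hq⟩
    · -- even period p = 2q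
      have hq' : p = 2*q := by omega
      subst hq'
      obtain ⟨v, hvinf, hvper, hvlen⟩ := even_period w u s q (by omega) hlen hidx hperD
      have hq0 : 0 < q := by omega
      have hlt2 := hw v q hvinf hq0 hvper
      have hq0' : (0:ℝ) < q := by exact_mod_cast hq0
      have hvlen' : (u.length : ℝ) ≤ 2 * v.length := by exact_mod_cast hvlen
      have : α * q ≤ (v.length : ℝ) := by push_cast at hαp ⊢; nlinarith
      rw [div_lt_iff₀ hq0'] at hlt2
      linarith
    · -- odd period
      exact odd_period_impossible w u s p (by omega) hul hlen hidx hperD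
  · intro hmu u p hinf hp hper
    have h1 : mu u <:+: mu w := by
      obtain ⟨a, b, rfl⟩ := hinf
      exact ⟨mu a, mu b, by simp [mu, List.flatMap_append]⟩
    have hperD := hasPeriod_getD hper
    have h2 : HasPeriod (mu u) (2*p) := by
      apply getD_hasPeriod
      intro k hk
      rw [mu_length] at hk
      rcases Nat.even_or_odd k with ⟨i, hi⟩ | ⟨i, hi⟩
      · rw [show k = 2*i by omega, show 2*i + 2*p = 2*(i+p) by ring,
          mu_getD_even u i (by omega), mu_getD_even u (i+p) (by omega)]
        exact hperD i (by omega)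
      · rw [show k = 2*i+1 by omega, show 2*i+1 + 2*p = 2*(i+p)+1 by ring,
          mu_getD_odd u i (by omega), mu_getD_odd u (i+p) (by omega)]
        rw [hperD i (by omega)]
    have h3 := hmu (mu u) (2*p) h1 (by omega) h2
    rw [mu_length] at h3
    have hp' : (0:ℝ) < p := by exact_mod_cast hp
    push_cast at h3
    rw [mul_div_mul_left _ _ (two_ne_zero)] at h3
    exact h3
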